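/- Let X be an ℝ^d-valued random variable with E|X|² < ∞, β > 0, and L : ℝ^d → ℝ measurable with L ≥ L_m and M = E e^{-βL(X)} > 0. Let x̄* = E[Xe^{-βL(X)}]/M. Then |E X - x̄*| ≤ e^{-βL_m/2} √(V/M), where V = E|X - E X|². -/

import Mathlib

open MeasureTheory Real

/-- Distance between the plain mean and the Gibbs-weighted mean:
|E X - x̄*| ≤ e^{-βL_m/2} √(V/M). -/
theorem stmt_16 {d : ℕ} {Ω : Type*} [MeasurableSpace Ω] (μ : Measure Ω)
    [IsProbabilityMeasure μ]
    (X : Ω → EuclideanSpace ℝ (Fin d)) (L : EuclideanSpace ℝ (Fin d) → ℝ)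
    (hL : Measurable L) (β : ℝ) (hβ : 0 < β) (Lm : ℝ) (hLm : ∀ x, Lm ≤ L x)
    (hIX : Integrable X μ)
    (hIX2 : Integrable (fun ω => ‖X ω‖ ^ 2) μ)
    (hI1 : Integrable (fun ω => Real.exp (-β * L (X ω))) μ)
    (hI2 : Integrable (fun ω => Real.exp (-β * L (X ω)) • X ω) μ)
    (M : ℝ) (hM : M = ∫ ω, Real.exp (-β * L (X ω)) ∂μ) (hMpos : 0 < M)
    (xbar : EuclideanSpace ℝ (Fin d))
    (hxbar : xbar = M⁻¹ • ∫ ω, Real.exp (-β * L (X ω)) • X ω ∂μ)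
    (V : ℝ) (hV : V = ∫ ω, ‖X ω - ∫ ω', X ω' ∂μ‖ ^ 2 ∂μ) :
    ‖(∫ ω, X ω ∂μ) - xbar‖ ≤ Real.exp (-β * Lm / 2) * Real.sqrt (V / M) := by
  set m : EuclideanSpace ℝ (Fin d) := ∫ ω, X ω ∂μ with hm
  set w : Ω → ℝ := fun ω => Real.exp (-β * L (X ω)) with hw
  set f : Ω → ℝ := fun ω => Real.exp (-β * L (X ω) / 2) with hf
  set g : Ω → ℝ := fun ω => ‖X ω - m‖ with hg
  -- measurability facts
  have hXm : AEMeasurable X μ := hIX.aemeasurable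
  have hLXm : AEMeasurable (fun ω => L (X ω)) μ := hL.comp_aemeasurable hXm
  have hfm : AEStronglyMeasurable f μ :=
    (Real.measurable_exp.comp_aemeasurable ((hLXm.const_mul (-β)).div_const 2)).aestronglyMeasurable
  have hgm : AEStronglyMeasurable g μ := (hIX.sub (integrable_const m)).1.norm
  -- g^2 integrable
  have hg2 : Integrable (fun ω => g ω ^ 2) μ := by
    refine Integrable.mono' (g := fun ω => ‖X ω‖^2 + (2*‖m‖) * ‖X ω‖ + ‖m‖^2)
      ((hIX2.add (hIX.norm.const_mul (2*‖m‖))).add (integrable_const _))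
      (hgm.pow 2) ?_
    filter_upwards with ω
    have h1 : ‖X ω - m‖ ≤ ‖X ω‖ + ‖m‖ := norm_sub_le _ _
    have h0 : (0:ℝ) ≤ ‖X ω - m‖ := norm_nonneg _
    simp only [hg, Real.norm_of_nonneg (pow_nonneg h0 2)]
    nlinarith [norm_nonneg (X ω), norm_nonneg m]
  have hVnn : 0 ≤ V := hV ▸ integral_nonneg fun ω => by positivity
  -- f^2 = w
  have hfsq : ∀ ω, f ω ^ 2 = w ω := by
    intro ω
    simp only [hf, hw, sq, ← Real.exp_add]
    ring_nf
  -- Memℒp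
  have hfL2 : MemLp f 2 μ := by
    rw [memLp_two_iff_integrable_sq hfm]
    refine hI1.congr ?_
    filter_upwards with ω using (hfsq ω).symm
  have hgL2 : MemLp g 2 μ := by
    rw [memLp_two_iff_integrable_sq hgm]
    exact hg2
  have hfg : Integrable (fun ω => f ω * g ω) μ := by
    have := (hgL2.smul hfL2 (r := 1) (hpqr := ⟨by simp [ENNReal.inv_two_add_inv_two]⟩) : MemLp (f • g) 1 μ)
    exact memLp_one_iff_integrable.mp this
  -- key identity: m - xbar = M⁻¹ • ∫ w ω • (m - X ω)
  have hIwm : Integrable (fun ω => w ω • m) μ := hI1.smul_const m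
  have hkey : m - xbar = M⁻¹ • ∫ ω, w ω • (m - X ω) ∂μ := by
    have : ∫ ω, w ω • (m - X ω) ∂μ = (∫ ω, w ω • m ∂μ) - ∫ ω, w ω • X ω ∂μ := by
      rw [← integral_sub hIwm hI2]
      congr 1; ext ω; rw [smul_sub]
    rw [this, integral_smul_const, ← hM, hxbar, smul_sub, smul_smul,
      inv_mul_cancel₀ hMpos.ne', one_smul]
  -- intermediate bound
  have hnorm1 : ‖m - xbar‖ ≤ M⁻¹ * ∫ ω, w ω * g ω ∂μ := by
    rw [hkey, norm_smul, Real.norm_of_nonneg (inv_nonneg.mpr hMpos.le)]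
    gcongr
    refine (norm_integral_le_integral_norm _).trans_eq ?_
    congr 1; ext ω
    rw [norm_smul, Real.norm_of_nonneg (Real.exp_nonneg _), ← norm_neg, neg_sub]
  -- pointwise bound  w * g ≤ exp(-βLm/2) * (f * g)
  have hpt : ∀ ω, w ω * g ω ≤ Real.exp (-β*Lm/2) * (f ω * g ω) := by
    intro ω
    have h1 : f ω ≤ Real.exp (-β*Lm/2) := by
      apply Real.exp_le_exp.mpr
      have := hLm (X ω)
      have : -β * L (X ω) ≤ -β * Lm := by nlinarith
      linarith
    calc w ω * g ω = f ω * (f ω * g ω) := by rw [← hfsq ω]; ring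
      _ ≤ Real.exp (-β*Lm/2) * (f ω * g ω) := by
          apply mul_le_mul_of_nonneg_right h1
          exact mul_nonneg (Real.exp_nonneg _) (norm_nonneg _)
  have hint1 : ∫ ω, w ω * g ω ∂μ ≤ Real.exp (-β*Lm/2) * ∫ ω, f ω * g ω ∂μ := by
    rw [← integral_const_mul]
    refine integral_mono_of_nonneg ?_ (hfg.const_mul _) ?_
    · filter_upwards with ω using mul_nonneg (Real.exp_nonneg _) (norm_nonneg _)
    · filter_upwards with ω using hpt ω
  -- Cauchy-Schwarz
  have hCS : ∫ ω, f ω * g ω ∂μ ≤ Real.sqrt M * Real.sqrt V := by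
    have h := integral_mul_le_Lp_mul_Lq_of_nonneg (μ := μ)
      (Real.holderConjugate_iff_eq_conjExponent (by norm_num) |>.mpr (by norm_num) :
        (2:ℝ).HolderConjugate 2)
      (Filter.Eventually.of_forall fun ω => Real.exp_nonneg _)
      (Filter.Eventually.of_forall fun ω => norm_nonneg _)
      (by simpa using hfL2) (by simpa using hgL2)
    refine h.trans_eq ?_
    have e1 : ∫ ω, f ω ^ (2:ℝ) ∂μ = M := by
      rw [hM]; congr 1; ext ω
      rw [Real.rpow_two, hfsq ω]
    have e2 : ∫ ω, g ω ^ (2:ℝ) ∂μ = V := by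
      rw [hV]; congr 1; ext ω; rw [Real.rpow_two]
    rw [e1, e2, ← Real.sqrt_eq_rpow, ← Real.sqrt_eq_rpow]
  -- combine
  have hfinal : ‖m - xbar‖ ≤ M⁻¹ * (Real.exp (-β*Lm/2) * (Real.sqrt M * Real.sqrt V)) := by
    refine hnorm1.trans ?_
    gcongr
    exact hint1.trans (by gcongr)
  refine hfinal.trans_eq ?_
  rw [Real.sqrt_div hVnn]
  rw [show M⁻¹ = (Real.sqrt M)⁻¹ * (Real.sqrt M)⁻¹ by
    rw [← mul_inv, Real.mul_self_sqrt hMpos.le]]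
  have hs : Real.sqrt M ≠ 0 := (Real.sqrt_pos.mpr hMpos).ne'
  field_simp
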